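/- Let C be a compact convex body in ℝ², centrally symmetric with center p, such that the set V of endpoints of diameter segments of C is finite. Then C can be partitioned into two subsets of strictly smaller diameter (its Borsuk number is 2). -/

import Mathlib

open Metric Set

local notation "E2" => EuclideanSpace ℝ (Fin 2)

private lemma exists_dist_eq_diam' {X : Type*} [MetricSpace X] {s : Set X}
    (hs : IsCompact s) (hne : s.Nonempty) :
    ∃ x ∈ s, ∃ y ∈ s, dist x y = Metric.diam s := by
  obtain ⟨⟨x, y⟩, hxy, hmax⟩ :=
    (hs.prod hs).exists_isMaxOn (hne.prod hne) continuous_dist.continuousOn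
  refine ⟨x, hxy.1, y, hxy.2, le_antisymm
    (Metric.dist_le_diam_of_mem hs.isBounded hxy.1 hxy.2) ?_⟩
  apply Metric.diam_le_of_forall_dist_le dist_nonneg
  intro a ha b hb
  exact hmax (Set.mk_mem_prod ha hb)

theorem finite_diameter_endpoints_implies_partition
    (C : Set (EuclideanSpace ℝ (Fin 2))) (p : EuclideanSpace ℝ (Fin 2))
    (hC : IsCompact C) (hconv : Convex ℝ C) (hint : (interior C).Nonempty)
    (hsym : ∀ x ∈ C, (2 : ℝ) • p - x ∈ C)
    (hfin : {x ∈ frontier C | ∃ y ∈ C, dist x y = Metric.diam C}.Finite) :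
    ∃ C₁ C₂ : Set (EuclideanSpace ℝ (Fin 2)), C = C₁ ∪ C₂ ∧
      Metric.diam C₁ < Metric.diam C ∧ Metric.diam C₂ < Metric.diam C := by
  set d := Metric.diam C with hd
  -- d > 0
  obtain ⟨z, hz⟩ := hint
  obtain ⟨ε, hε, hball⟩ := Metric.isOpen_iff.1 isOpen_interior z hz
  have hz1 : z ∈ C := interior_subset hz
  have hz2 : z + (ε/2) • (EuclideanSpace.single (0 : Fin 2) (1:ℝ)) ∈ C := by
    apply interior_subset; apply hball
    simp only [Metric.mem_ball, dist_self_add_left, norm_smul]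
    rw [EuclideanSpace.norm_single]
    simp only [norm_one, mul_one]
    rw [Real.norm_eq_abs, abs_of_pos (half_pos hε)]
    linarith
  have hdpos : 0 < d := by
    have hle : dist z (z + (ε/2) • (EuclideanSpace.single (0 : Fin 2) (1:ℝ))) ≤ d :=
      Metric.dist_le_diam_of_mem hC.isBounded hz1 hz2
    rw [dist_self_add_right, norm_smul, EuclideanSpace.norm_single] at hle
    simp only [norm_one, mul_one] at hle
    rw [Real.norm_eq_abs, abs_of_pos (half_pos hε)] at hle
    linarith
  -- every point of C is within d/2 of p
  have hrad : ∀ x ∈ C, dist x p ≤ d / 2 := by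
    intro x hx
    have h1 : dist x ((2:ℝ) • p - x) ≤ d :=
      Metric.dist_le_diam_of_mem hC.isBounded hx (hsym x hx)
    have h2 : x - ((2:ℝ) • p - x) = (2:ℝ) • (x - p) := by module
    rw [dist_eq_norm, h2, norm_smul] at h1
    rw [dist_eq_norm]
    simp at h1
    linarith
  -- the sphere points
  set S : Set E2 := {x ∈ C | dist x p = d / 2} with hS
  have hSsub : S ⊆ {x ∈ frontier C | ∃ y ∈ C, dist x y = d} := by
    rintro x ⟨hxC, hxd⟩
    have hxp : x ≠ p := by
      intro h; rw [h, dist_self] at hxd; linarith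
    refine ⟨⟨?_, ?_⟩, (2:ℝ) • p - x, hsym x hxC, ?_⟩
    · exact subset_closure hxC
    · -- x not in interior
      intro hxint
      obtain ⟨δ, hδ, hb⟩ := Metric.isOpen_iff.1 isOpen_interior x hxint
      set t : ℝ := δ / (2 * ‖x - p‖) with ht
      have hnorm : ‖x - p‖ = d / 2 := by rw [← dist_eq_norm, hxd]
      have hnpos : 0 < ‖x - p‖ := by rw [hnorm]; linarith
      have htpos : 0 < t := by positivity
      have hx' : x + t • (x - p) ∈ C := by
        apply interior_subset; apply hb
        simp only [Metric.mem_ball, dist_self_add_left, norm_smul]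
        rw [Real.norm_eq_abs, abs_of_pos htpos]
        have heq2 : t * ‖x - p‖ = δ / 2 := by
          rw [ht]; field_simp
        rw [heq2]; linarith
      have := hrad _ hx'
      rw [dist_eq_norm] at this
      have heq : x + t • (x - p) - p = (1 + t) • (x - p) := by module
      rw [heq, norm_smul, Real.norm_eq_abs, abs_of_pos (by linarith)] at this
      nlinarith
    · have h2 : x - ((2:ℝ) • p - x) = (2:ℝ) • (x - p) := by module
      rw [dist_eq_norm, h2, norm_smul]
      rw [← dist_eq_norm] at *
      simp [hxd]
      linarith
  have hSfin : S.Finite := hfin.subset hSsub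
  -- choose u not orthogonal to any v - p, v ∈ S
  have hne : ∃ u : E2, ∀ v ∈ S, (inner ℝ (v - p) u : ℝ) ≠ 0 := by
    classical
    set F : Finset (Subspace ℝ E2) :=
      hSfin.toFinset.image (fun v => (ℝ ∙ (v - p))ᗮ) with hF
    have htop : ⊤ ∉ F := by
      intro h
      rw [hF, Finset.mem_image] at h
      obtain ⟨v, hv, hveq⟩ := h
      rw [Set.Finite.mem_toFinset] at hv
      have hvp : v ≠ p := by
        have hv2 : dist v p = d / 2 := hv.2
        intro h; rw [h, dist_self] at hv2; linarith
      have : (ℝ ∙ (v - p)) = ⊥ := by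
        rwa [Submodule.orthogonal_eq_top_iff] at hveq
      rw [Submodule.span_singleton_eq_bot, sub_eq_zero] at this
      exact hvp this
    have hcov := Subspace.biUnion_ne_univ_of_top_notMem (E := E2) htop
    rw [Set.ne_univ_iff_exists_notMem] at hcov
    obtain ⟨u, hu⟩ := hcov
    refine ⟨u, fun v hv hinner => hu ?_⟩
    rw [Set.mem_iUnion₂]
    refine ⟨(ℝ ∙ (v - p))ᗮ, ?_, ?_⟩
    · rw [hF, Finset.mem_image]
      exact ⟨v, Set.Finite.mem_toFinset _ |>.2 hv, rfl⟩
    · exact Submodule.mem_orthogonal_singleton_iff_inner_right.2 hinner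
  obtain ⟨u, hu⟩ := hne
  -- key claim: each half has smaller diameter
  have key : ∀ w : E2, (∀ v ∈ S, (inner ℝ (v - p) w : ℝ) ≠ 0) →
      Metric.diam {x ∈ C | 0 ≤ (inner ℝ (x - p) w : ℝ)} < d := by
    intro w hw
    set D : Set E2 := {x ∈ C | 0 ≤ (inner ℝ (x - p) w : ℝ)} with hD
    have hDsub : D ⊆ C := fun x hx => hx.1
    have hDle : Metric.diam D ≤ d := Metric.diam_mono hDsub hC.isBounded
    rcases lt_or_eq_of_le hDle with h | h
    · exact h
    exfalso
    have hDcomp : IsCompact D := by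
      have : D = C ∩ (fun x => (inner ℝ (x - p) w : ℝ)) ⁻¹' (Set.Ici 0) := rfl
      rw [this]
      exact hC.inter_right (IsClosed.preimage
        (Continuous.inner (continuous_id.sub continuous_const) continuous_const)
        isClosed_Ici)
    rcases Set.eq_empty_or_nonempty D with hemp | hDne
    · rw [hemp, Metric.diam_empty] at h; linarith
    obtain ⟨x, hxD, y, hyD, hxy⟩ := exists_dist_eq_diam' hDcomp hDne
    rw [h] at hxy
    -- x, y at distance d apart, so both at distance d/2 from p, antipodal
    have hx2 : dist x p ≤ d / 2 := hrad x hxD.1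
    have hy2 : dist y p ≤ d / 2 := hrad y hyD.1
    have htri : dist x y ≤ dist x p + dist p y := dist_triangle x p y
    rw [dist_comm p y] at htri
    have hxd2 : dist x p = d / 2 := by linarith [hxy ▸ htri]
    have hyd2 : dist y p = d / 2 := by linarith [hxy ▸ htri]
    have hxS : x ∈ S := ⟨hxD.1, hxd2⟩
    -- equality case of triangle inequality : y = 2p - x
    have hnx : ‖x - p‖ = d / 2 := by rw [← dist_eq_norm]; exact hxd2
    have hny : ‖p - y‖ = d / 2 := by rw [← dist_eq_norm, dist_comm]; exact hyd2
    have hsum : ‖(x - p) + (p - y)‖ = ‖x - p‖ + ‖p - y‖ := by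
      have : (x - p) + (p - y) = x - y := by module
      rw [this, ← dist_eq_norm, hxy, hnx, hny]; ring
    have hinner : (inner ℝ (x - p) (p - y) : ℝ) = ‖x - p‖ * ‖p - y‖ := by
      have hsq := norm_add_sq_real (x - p) (p - y)
      rw [hsum] at hsq
      nlinarith [hsq]
    rw [inner_eq_norm_mul_iff_real, hnx, hny] at hinner
    have hne2 : (d / 2 : ℝ) ≠ 0 := by linarith
    have hxyp : x - p = p - y := smul_right_injective E2 hne2 hinner
    -- contradiction with sign condition
    have h1 : (0:ℝ) ≤ inner ℝ (x - p) w := hxD.2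
    have h2 : (0:ℝ) ≤ inner ℝ (y - p) w := hyD.2
    have h3 : y - p = -(x - p) := by rw [hxyp]; module
    rw [h3, inner_neg_left] at h2
    exact hw x hxS (le_antisymm (by linarith) h1)
  refine ⟨{x ∈ C | 0 ≤ (inner ℝ (x - p) u : ℝ)}, {x ∈ C | 0 ≤ (inner ℝ (x - p) (-u) : ℝ)}, ?_, ?_, ?_⟩
  · ext x
    simp only [Set.mem_union, Set.mem_setOf_eq, inner_neg_right]
    constructor
    · intro hx
      rcases le_total 0 (inner ℝ (x - p) u : ℝ) with h | h
      · exact Or.inl ⟨hx, h⟩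
      · exact Or.inr ⟨hx, by linarith⟩
    · rintro (⟨h, _⟩ | ⟨h, _⟩) <;> exact h
  · exact key u hu
  · exact key (-u) (fun v hv => by rw [inner_neg_right]; exact fun h => hu v hv (by linarith [neg_eq_zero.1 h]))
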